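/- Let X be a d-box, F a polybox in X, and F, G two proper suits for F. Then for every real-valued additive function f on proper boxes of X, Σ_{A ∈ F} f(A) = Σ_{A ∈ G} f(A). -/

import Mathlib

open Finset


lemma kp_coord {α : Type*} [Fintype α] [DecidableEq α]
    (A B : Finset α → Prop)
    (hAne : ∀ S, A S → S.Nonempty ∧ S ≠ Finset.univ)
    (hBne : ∀ S, B S → S.Nonempty ∧ S ≠ Finset.univ)
    (hApair : ∀ S T, A S → A T → S ≠ T → S = Tᶜ)
    (hBpair : ∀ S T, B S → B T → S ≠ T → S = Tᶜ)
    (hcov : ∀ y, (∃ S, A S ∧ y ∈ S) ↔ (∃ T, B T ∧ y ∈ T))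
    (ε : Finset α → Bool)
    (hε : ∀ S : Finset α, S.Nonempty → S ≠ Finset.univ → ε Sᶜ = !ε S)
    (h : ∃ S, A S ∧ ε S = true) : ∃ T, B T ∧ ε T = true := by
  obtain ⟨S, hSA, hSe⟩ := h
  obtain ⟨SN, SU⟩ := hAne S hSA
  by_contra hno
  push_neg at hno
  have hBuniq : ∀ T T', B T → B T' → T = T' := by
    intro T T' hT hT'
    by_contra hne
    have hc := hBpair T T' hT hT' hne
    obtain ⟨N', U'⟩ := hBne T' hT'
    have h2 := hε T' N' U'
    have h3 := hno T hT
    have h4 := hno T' hT'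
    rw [hc, h2] at h3
    simp at h3 h4
    rw [h4] at h3
    simp at h3
  obtain ⟨y0, hy0⟩ := SN
  obtain ⟨T0, hT0, hy0T0⟩ := (hcov y0).1 ⟨S, hSA, hy0⟩
  by_cases hSc : ∃ S', A S' ∧ S' = Sᶜ
  · obtain ⟨T0N, T0U⟩ := hBne T0 hT0
    obtain ⟨z, hz⟩ : ∃ z, z ∉ T0 := by
      have hne : T0ᶜ ≠ ∅ := fun h => T0U ((Finset.compl_eq_empty_iff T0).1 h)
      obtain ⟨z, hz⟩ := Finset.nonempty_iff_ne_empty.2 hne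
      exact ⟨z, Finset.mem_compl.1 hz⟩
    obtain ⟨S', hS'A, hS'c⟩ := hSc
    have hzcov : ∃ Sx, A Sx ∧ z ∈ Sx := by
      by_cases hzS : z ∈ S
      · exact ⟨S, hSA, hzS⟩
      · exact ⟨S', hS'A, by rw [hS'c]; exact Finset.mem_compl.2 hzS⟩
    obtain ⟨T', hT', hzT'⟩ := (hcov z).1 hzcov
    exact hz (hBuniq T' T0 hT' hT0 ▸ hzT')
  · have hAuniq : ∀ S', A S' → S' = S := by
      intro S' h'
      by_contra hne
      exact hSc ⟨S', h', hApair S' S h' hSA hne⟩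
    have hsub1 : T0 ⊆ S := by
      intro z hzT0
      obtain ⟨S', hS', hzS'⟩ := (hcov z).2 ⟨T0, hT0, hzT0⟩
      exact hAuniq S' hS' ▸ hzS'
    have hsub2 : S ⊆ T0 := by
      intro z hzS
      obtain ⟨T', hT', hzT'⟩ := (hcov z).1 ⟨S, hSA, hzS⟩
      exact hBuniq T' T0 hT' hT0 ▸ hzT'
    exact hno T0 hT0 (by rw [Finset.Subset.antisymm hsub1 hsub2]; exact hSe)

lemma kp_seliff {d : ℕ} {X : Fin d → Type*} [∀ i, Fintype (X i)] [∀ i, DecidableEq (X i)]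
    (x0 : ∀ i, X i)
    (𝓕 𝓖 : Finset (∀ i, Finset (X i)))
    (h𝓕p : ∀ A ∈ 𝓕, ∀ i, (A i).Nonempty ∧ A i ≠ Finset.univ)
    (h𝓖p : ∀ A ∈ 𝓖, ∀ i, (A i).Nonempty ∧ A i ≠ Finset.univ)
    (h𝓕d : ∀ A ∈ 𝓕, ∀ B ∈ 𝓕, A ≠ B → ∃ i, A i = (B i)ᶜ)
    (h𝓖d : ∀ A ∈ 𝓖, ∀ B ∈ 𝓖, A ≠ B → ∃ i, A i = (B i)ᶜ)
    (hu : {x : ∀ i, X i | ∃ A ∈ 𝓕, ∀ i, x i ∈ A i} = {x | ∃ A ∈ 𝓖, ∀ i, x i ∈ A i})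
    (ε : ∀ i, Finset (X i) → Bool)
    (hε : ∀ i, ∀ S : Finset (X i), S.Nonempty → S ≠ Finset.univ → ε i Sᶜ = !ε i S) :
    ((∃ A ∈ 𝓕, ∀ i, ε i (A i) = true) ↔ (∃ A ∈ 𝓖, ∀ i, ε i (A i) = true)) := by
  classical
  suffices H : ∀ J : Finset (Fin d), ∀ x : ∀ i, X i,
      ((∃ A ∈ 𝓕, (∀ i ∈ J, ε i (A i) = true) ∧ ∀ i, i ∉ J → x i ∈ A i) ↔
       (∃ A ∈ 𝓖, (∀ i ∈ J, ε i (A i) = true) ∧ ∀ i, i ∉ J → x i ∈ A i)) by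
    have := H Finset.univ x0
    simpa using this
  intro J
  induction J using Finset.induction_on with
  | empty =>
    intro x
    have := Set.ext_iff.1 hu x
    simpa using this
  | @insert j J hj ih =>
    intro x
    -- generic pairwise-complement property for the coordinate-j family
    have pairgen : ∀ (𝓗 : Finset (∀ i, Finset (X i))),
        (∀ A ∈ 𝓗, ∀ i, (A i).Nonempty ∧ A i ≠ Finset.univ) →
        (∀ A ∈ 𝓗, ∀ B ∈ 𝓗, A ≠ B → ∃ i, A i = (B i)ᶜ) →
        ∀ (S T : Finset (X j)),
        (∃ A ∈ 𝓗, A j = S ∧ (∀ i ∈ J, ε i (A i) = true) ∧ ∀ i, i ∉ insert j J → x i ∈ A i) →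
        (∃ A ∈ 𝓗, A j = T ∧ (∀ i ∈ J, ε i (A i) = true) ∧ ∀ i, i ∉ insert j J → x i ∈ A i) →
        S ≠ T → S = Tᶜ := by
      rintro 𝓗 hp hd S T ⟨A, hA, rfl, hAJ, hAx⟩ ⟨B, hB, rfl, hBJ, hBx⟩ hST
      obtain ⟨k, hk⟩ := hd A hA B hB (fun h => hST (by rw [h]))
      by_cases hkJ : k ∈ J
      · exfalso
        have h1 := hAJ k hkJ
        have h2 := hBJ k hkJ
        have h3 := hε k (B k) (hp B hB k).1 (hp B hB k).2
        rw [← hk, h1, h2] at h3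
        simp at h3
      · by_cases hkj : k = j
        · subst hkj; exact hk
        · exfalso
          have hknot : k ∉ insert j J := by simp [Finset.mem_insert, hkj, hkJ]
          have hxA := hAx k hknot
          have hxB := hBx k hknot
          rw [hk] at hxA
          exact (Finset.mem_compl.1 hxA) hxB
    -- generic covering transfer
    have covgen : ∀ (𝓗 𝓚 : Finset (∀ i, Finset (X i))),
        (∀ x' : ∀ i, X i,
          (∃ A ∈ 𝓗, (∀ i ∈ J, ε i (A i) = true) ∧ ∀ i, i ∉ J → x' i ∈ A i) →
          (∃ A ∈ 𝓚, (∀ i ∈ J, ε i (A i) = true) ∧ ∀ i, i ∉ J → x' i ∈ A i)) →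
        ∀ y : X j,
        (∃ S, (∃ A ∈ 𝓗, A j = S ∧ (∀ i ∈ J, ε i (A i) = true) ∧
            ∀ i, i ∉ insert j J → x i ∈ A i) ∧ y ∈ S) →
        (∃ T, (∃ A ∈ 𝓚, A j = T ∧ (∀ i ∈ J, ε i (A i) = true) ∧
            ∀ i, i ∉ insert j J → x i ∈ A i) ∧ y ∈ T) := by
      rintro 𝓗 𝓚 htr y ⟨S, ⟨A, hA, rfl, hAJ, hAx⟩, hy⟩
      have hlhs : ∃ A ∈ 𝓗, (∀ i ∈ J, ε i (A i) = true) ∧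
          ∀ i, i ∉ J → Function.update x j y i ∈ A i := by
        refine ⟨A, hA, hAJ, ?_⟩
        intro i hiJ
        by_cases hij : i = j
        · subst hij; simpa [Function.update_self] using hy
        · rw [Function.update_of_ne hij]
          exact hAx i (by simp [Finset.mem_insert, hij, hiJ])
      obtain ⟨B, hB, hBJ, hBx⟩ := htr (Function.update x j y) hlhs
      refine ⟨B j, ⟨B, hB, rfl, hBJ, ?_⟩, ?_⟩
      · intro i hi
        have hiJ : i ∉ J := fun h => hi (Finset.mem_insert_of_mem h)
        have hij : i ≠ j := fun h => hi (h ▸ Finset.mem_insert_self j J)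
        have := hBx i hiJ
        rwa [Function.update_of_ne hij] at this
      · have := hBx j hj
        simpa [Function.update_self] using this
    have hcov : ∀ y : X j,
        (∃ S, (∃ A ∈ 𝓕, A j = S ∧ (∀ i ∈ J, ε i (A i) = true) ∧
            ∀ i, i ∉ insert j J → x i ∈ A i) ∧ y ∈ S) ↔
        (∃ T, (∃ A ∈ 𝓖, A j = T ∧ (∀ i ∈ J, ε i (A i) = true) ∧
            ∀ i, i ∉ insert j J → x i ∈ A i) ∧ y ∈ T) := by
      intro y
      exact ⟨covgen 𝓕 𝓖 (fun x' => (ih x').1) y, covgen 𝓖 𝓕 (fun x' => (ih x').2) y⟩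
    have hAne : ∀ S, (∃ A ∈ 𝓕, A j = S ∧ (∀ i ∈ J, ε i (A i) = true) ∧
        ∀ i, i ∉ insert j J → x i ∈ A i) → S.Nonempty ∧ S ≠ Finset.univ := by
      rintro S ⟨A, hA, rfl, -⟩; exact h𝓕p A hA j
    have hBne : ∀ S, (∃ A ∈ 𝓖, A j = S ∧ (∀ i ∈ J, ε i (A i) = true) ∧
        ∀ i, i ∉ insert j J → x i ∈ A i) → S.Nonempty ∧ S ≠ Finset.univ := by
      rintro S ⟨A, hA, rfl, -⟩; exact h𝓖p A hA j
    -- translate goal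
    constructor
    · rintro ⟨A, hA, hsel, hout⟩
      have h1 : ∃ S, (∃ A ∈ 𝓕, A j = S ∧ (∀ i ∈ J, ε i (A i) = true) ∧
          ∀ i, i ∉ insert j J → x i ∈ A i) ∧ ε j S = true :=
        ⟨A j, ⟨A, hA, rfl, fun i hi => hsel i (Finset.mem_insert_of_mem hi), hout⟩,
          hsel j (Finset.mem_insert_self j J)⟩
      obtain ⟨T, ⟨B, hB, rfl, hBJ, hBx⟩, hT⟩ := kp_coord _ _ hAne hBne
        (pairgen 𝓕 h𝓕p h𝓕d) (pairgen 𝓖 h𝓖p h𝓖d) hcov (ε j) (hε j) h1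
      refine ⟨B, hB, ?_, hBx⟩
      intro i hi
      rcases Finset.mem_insert.1 hi with h | h
      · subst h; exact hT
      · exact hBJ i h
    · rintro ⟨A, hA, hsel, hout⟩
      have h1 : ∃ S, (∃ A ∈ 𝓖, A j = S ∧ (∀ i ∈ J, ε i (A i) = true) ∧
          ∀ i, i ∉ insert j J → x i ∈ A i) ∧ ε j S = true :=
        ⟨A j, ⟨A, hA, rfl, fun i hi => hsel i (Finset.mem_insert_of_mem hi), hout⟩,
          hsel j (Finset.mem_insert_self j J)⟩
      obtain ⟨T, ⟨B, hB, rfl, hBJ, hBx⟩, hT⟩ := kp_coord _ _ hBne hAne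
        (pairgen 𝓖 h𝓖p h𝓖d) (pairgen 𝓕 h𝓕p h𝓕d) (fun y => (hcov y).symm) (ε j) (hε j) h1
      refine ⟨B, hB, ?_, hBx⟩
      intro i hi
      rcases Finset.mem_insert.1 hi with h | h
      · subst h; exact hT
      · exact hBJ i h

lemma kp_count {d : ℕ} {X : Fin d → Type*} [∀ i, Fintype (X i)] [∀ i, DecidableEq (X i)]
    (𝓕 𝓖 : Finset (∀ i, Finset (X i)))
    (h𝓕p : ∀ A ∈ 𝓕, ∀ i, (A i).Nonempty ∧ A i ≠ Finset.univ)
    (h𝓖p : ∀ A ∈ 𝓖, ∀ i, (A i).Nonempty ∧ A i ≠ Finset.univ)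
    (h𝓕d : ∀ A ∈ 𝓕, ∀ B ∈ 𝓕, A ≠ B → ∃ i, A i = (B i)ᶜ)
    (h𝓖d : ∀ A ∈ 𝓖, ∀ B ∈ 𝓖, A ≠ B → ∃ i, A i = (B i)ᶜ)
    (ε : ∀ i, Finset (X i) → Bool)
    (hε : ∀ i, ∀ S : Finset (X i), S.Nonempty → S ≠ Finset.univ → ε i Sᶜ = !ε i S)
    (hsel : (∃ A ∈ 𝓕, ∀ i, ε i (A i) = true) ↔ (∃ A ∈ 𝓖, ∀ i, ε i (A i) = true)) :
    (∑ A ∈ 𝓕, ∏ i, if ε i (A i) = true then (1:ℝ) else 0) =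
      ∑ A ∈ 𝓖, ∏ i, if ε i (A i) = true then (1:ℝ) else 0 := by
  classical
  have uniq : ∀ (𝓗 : Finset (∀ i, Finset (X i))),
      (∀ A ∈ 𝓗, ∀ i, (A i).Nonempty ∧ A i ≠ Finset.univ) →
      (∀ A ∈ 𝓗, ∀ B ∈ 𝓗, A ≠ B → ∃ i, A i = (B i)ᶜ) →
      (𝓗.filter (fun A => ∀ i, ε i (A i) = true)).card ≤ 1 := by
    intro 𝓗 hp hd
    rw [Finset.card_le_one]
    intro A hA B hB
    rw [Finset.mem_filter] at hA hB
    by_contra hne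
    obtain ⟨k, hk⟩ := hd A hA.1 B hB.1 hne
    have h3 := hε k (B k) (hp B hB.1 k).1 (hp B hB.1 k).2
    rw [← hk, hA.2 k, hB.2 k] at h3
    simp at h3
  have trans : ∀ (𝓗 : Finset (∀ i, Finset (X i))),
      (∑ A ∈ 𝓗, ∏ i, if ε i (A i) = true then (1:ℝ) else 0) =
        ((𝓗.filter (fun A => ∀ i, ε i (A i) = true)).card : ℝ) := by
    intro 𝓗
    rw [← Finset.sum_boole]
    refine Finset.sum_congr rfl ?_
    intro A _
    rw [Finset.prod_boole]
    simp
  rw [trans 𝓕, trans 𝓖]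
  rcases (𝓕.filter (fun A => ∀ i, ε i (A i) = true)).eq_empty_or_nonempty with h | h
  · have h2 : (𝓖.filter (fun A => ∀ i, ε i (A i) = true)) = ∅ := by
      rw [Finset.eq_empty_iff_forall_notMem]
      intro B hB
      rw [Finset.mem_filter] at hB
      obtain ⟨A, hA, hAs⟩ := hsel.2 ⟨B, hB.1, hB.2⟩
      exact Finset.eq_empty_iff_forall_notMem.1 h A (Finset.mem_filter.2 ⟨hA, hAs⟩)
    rw [h, h2]
  · obtain ⟨A, hA⟩ := h
    rw [Finset.mem_filter] at hA
    obtain ⟨B, hB, hBs⟩ := hsel.1 ⟨A, hA.1, hA.2⟩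
    have h1 : (𝓕.filter (fun A => ∀ i, ε i (A i) = true)).card = 1 :=
      le_antisymm (uniq 𝓕 h𝓕p h𝓕d)
        (Finset.card_pos.2 ⟨A, Finset.mem_filter.2 hA⟩)
    have h2 : (𝓖.filter (fun A => ∀ i, ε i (A i) = true)).card = 1 :=
      le_antisymm (uniq 𝓖 h𝓖p h𝓖d)
        (Finset.card_pos.2 ⟨B, Finset.mem_filter.2 ⟨hB, hBs⟩⟩)
    rw [h1, h2]

def kp_cval {α : Type*} [Fintype α] [DecidableEq α] (x0 : α) (S : Finset α) : ℕ :=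
  if x0 ∈ S then 0 else if S = {x0}ᶜ then 1 else 2

lemma kp_expand {d : ℕ} {X : Fin d → Type*} [∀ i, Fintype (X i)] [∀ i, DecidableEq (X i)]
    (x0 : ∀ i, X i) (hX : ∀ i, 2 ≤ Fintype.card (X i))
    (f : (∀ i, Finset (X i)) → ℝ)
    (hadd : ∀ (i : Fin d) (A C : ∀ i, Finset (X i)),
      (∀ j, (A j).Nonempty ∧ A j ≠ Finset.univ) →
      (∀ j, (C j).Nonempty ∧ C j ≠ Finset.univ) →
      (∀ j, j ≠ i → A j = C j) →
      f A + f (Function.update A i (A i)ᶜ) = f C + f (Function.update C i (C i)ᶜ)) :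
    ∀ (A : ∀ i, Finset (X i)), (∀ j, (A j).Nonempty ∧ A j ≠ Finset.univ) →
    ∃ lam : (∀ i, Finset (X i)) → ℝ,
      (∀ B, lam B ≠ 0 → (∀ j, (B j).Nonempty ∧ B j ≠ Finset.univ) ∧
        ∀ i, x0 i ∈ B i ∨ B i = ({x0 i}ᶜ : Finset (X i))) ∧
      (f A = ∑ B : (∀ i, Finset (X i)), lam B * f B) ∧
      (∀ ε : ∀ i, Finset (X i) → Bool,
        (∀ i, ∀ S : Finset (X i), S.Nonempty → S ≠ Finset.univ → ε i Sᶜ = !ε i S) →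
        (∏ i, if ε i (A i) = true then (1:ℝ) else 0) =
          ∑ B : (∀ i, Finset (X i)), lam B * ∏ i, if ε i (B i) = true then (1:ℝ) else 0) := by
  classical
  suffices H : ∀ n : ℕ, ∀ A : (∀ i, Finset (X i)), (∀ j, (A j).Nonempty ∧ A j ≠ Finset.univ) →
      (∑ i, kp_cval (x0 i) (A i)) = n →
      ∃ lam : (∀ i, Finset (X i)) → ℝ,
      (∀ B, lam B ≠ 0 → (∀ j, (B j).Nonempty ∧ B j ≠ Finset.univ) ∧
        ∀ i, x0 i ∈ B i ∨ B i = ({x0 i}ᶜ : Finset (X i))) ∧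
      (f A = ∑ B : (∀ i, Finset (X i)), lam B * f B) ∧
      (∀ ε : ∀ i, Finset (X i) → Bool,
        (∀ i, ∀ S : Finset (X i), S.Nonempty → S ≠ Finset.univ → ε i Sᶜ = !ε i S) →
        (∏ i, if ε i (A i) = true then (1:ℝ) else 0) =
          ∑ B : (∀ i, Finset (X i)), lam B * ∏ i, if ε i (B i) = true then (1:ℝ) else 0) by
    exact fun A hA => H _ A hA rfl
  intro n
  induction n using Nat.strong_induction_on with
  | _ n ih =>
  intro A hA hn
  by_cases hbase : ∀ i, x0 i ∈ A i ∨ A i = ({x0 i}ᶜ : Finset (X i))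
  · refine ⟨fun B => if B = A then 1 else 0, ?_, ?_, ?_⟩
    · intro B hB
      have hBA : B = A := by by_contra h; simp [h] at hB
      subst hBA; exact ⟨hA, hbase⟩
    · simp [ite_mul, Finset.sum_ite_eq']
    · intro ε hε
      simp [ite_mul, Finset.sum_ite_eq']
  · push_neg at hbase
    obtain ⟨j, hj1, hj2⟩ := hbase
    have hu_ne : ({x0 j} : Finset (X j)) ≠ Finset.univ := by
      intro h
      have h1 : (Finset.univ : Finset (X j)).card = 1 := by rw [← h]; simp
      rw [Finset.card_univ] at h1
      have := hX j; omega
    have hu_prop : ({x0 j} : Finset (X j)).Nonempty ∧ ({x0 j} : Finset (X j)) ≠ Finset.univ :=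
      ⟨Finset.singleton_nonempty _, hu_ne⟩
    have huc_prop : ({x0 j}ᶜ : Finset (X j)).Nonempty ∧ ({x0 j}ᶜ : Finset (X j)) ≠ Finset.univ := by
      constructor
      · rw [Finset.nonempty_iff_ne_empty]
        intro h; exact hu_ne ((Finset.compl_eq_empty_iff _).1 h)
      · rw [Ne, Finset.compl_eq_univ_iff]
        exact Finset.singleton_ne_empty _
    have hAjc_prop : ((A j)ᶜ).Nonempty ∧ (A j)ᶜ ≠ Finset.univ := by
      constructor
      · rw [Finset.nonempty_iff_ne_empty]
        intro h; exact (hA j).2 ((Finset.compl_eq_empty_iff _).1 h)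
      · rw [Ne, Finset.compl_eq_univ_iff]
        exact Finset.nonempty_iff_ne_empty.1 (hA j).1
    have hupd : ∀ (S : Finset (X j)), S.Nonempty ∧ S ≠ Finset.univ →
        ∀ k, ((Function.update A j S) k).Nonempty ∧ (Function.update A j S) k ≠ Finset.univ := by
      intro S hS k
      by_cases hkj : k = j
      · subst hkj; rw [Function.update_self]; exact hS
      · rw [Function.update_of_ne hkj]; exact hA k
    -- cval bookkeeping
    have hsum : ∀ (S : Finset (X j)), (∑ i, kp_cval (x0 i) ((Function.update A j S) i))
        = kp_cval (x0 j) S + ∑ i ∈ Finset.univ.erase j, kp_cval (x0 i) (A i) := by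
      intro S
      rw [← Finset.add_sum_erase _ (fun i => kp_cval (x0 i) (Function.update A j S i))
        (Finset.mem_univ j)]
      congr 1
      · rw [Function.update_self]
      · apply Finset.sum_congr rfl
        intro i hi
        rw [Function.update_of_ne (Finset.ne_of_mem_erase hi)]
    have hnA : n = 2 + ∑ i ∈ Finset.univ.erase j, kp_cval (x0 i) (A i) := by
      rw [← hn, ← Finset.add_sum_erase _ (fun i => kp_cval (x0 i) (A i)) (Finset.mem_univ j)]
      congr 1
      simp [kp_cval, hj1, hj2]
    have c1 : kp_cval (x0 j) ({x0 j} : Finset (X j)) = 0 := by simp [kp_cval]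
    have c2 : kp_cval (x0 j) ({x0 j}ᶜ : Finset (X j)) = 1 := by
      simp [kp_cval, Finset.mem_compl]
    have c3 : kp_cval (x0 j) ((A j)ᶜ) = 0 := by
      simp [kp_cval, Finset.mem_compl, hj1]
    obtain ⟨lam1, hs1, hf1, he1⟩ := ih (∑ i, kp_cval (x0 i) ((Function.update A j ({x0 j})) i))
      (by rw [hsum, c1, hnA]; omega) _ (hupd _ hu_prop) rfl
    obtain ⟨lam2, hs2, hf2, he2⟩ := ih (∑ i, kp_cval (x0 i) ((Function.update A j ({x0 j}ᶜ)) i))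
      (by rw [hsum, c2, hnA]; omega) _ (hupd _ huc_prop) rfl
    obtain ⟨lam3, hs3, hf3, he3⟩ := ih (∑ i, kp_cval (x0 i) ((Function.update A j ((A j)ᶜ)) i))
      (by rw [hsum, c3, hnA]; omega) _ (hupd _ hAjc_prop) rfl
    -- the additivity relation
    have hf : f A = f (Function.update A j ({x0 j})) + f (Function.update A j ({x0 j}ᶜ))
        - f (Function.update A j ((A j)ᶜ)) := by
      have h := hadd j A (Function.update A j ({x0 j})) hA (hupd _ hu_prop)
        (fun k hk => (Function.update_of_ne hk _ _).symm)
      have e1 : Function.update (Function.update A j ({x0 j})) j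
          (((Function.update A j ({x0 j})) j)ᶜ) = Function.update A j ({x0 j}ᶜ) := by
        rw [Function.update_self, Function.update_idem]
      rw [e1] at h
      linarith
    refine ⟨fun B => lam1 B + lam2 B - lam3 B, ?_, ?_, ?_⟩
    · intro B hB
      by_cases h1 : lam1 B = 0
      · by_cases h2 : lam2 B = 0
        · have h3 : lam3 B ≠ 0 := by intro h3; simp [h1, h2, h3] at hB
          exact hs3 B h3
        · exact hs2 B h2
      · exact hs1 B h1
    · rw [hf, hf1, hf2, hf3]
      rw [← Finset.sum_add_distrib, ← Finset.sum_sub_distrib]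
      apply Finset.sum_congr rfl
      intro B _
      ring
    · intro ε hε
      have hprod : ∀ (S : Finset (X j)),
          (∏ i, if ε i ((Function.update A j S) i) = true then (1:ℝ) else 0)
          = (if ε j S = true then (1:ℝ) else 0) *
            ∏ i ∈ Finset.univ.erase j, (if ε i (A i) = true then (1:ℝ) else 0) := by
        intro S
        rw [← Finset.mul_prod_erase _ (fun i => if ε i ((Function.update A j S) i) = true
          then (1:ℝ) else 0) (Finset.mem_univ j)]
        congr 1
        · rw [Function.update_self]
        · apply Finset.prod_congr rfl
          intro i hi
          rw [Function.update_of_ne (Finset.ne_of_mem_erase hi)]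
      have split : (∑ B : (∀ i, Finset (X i)), (lam1 B + lam2 B - lam3 B) *
            ∏ i, if ε i (B i) = true then (1:ℝ) else 0)
          = (∑ B : (∀ i, Finset (X i)), lam1 B * ∏ i, if ε i (B i) = true then (1:ℝ) else 0)
            + (∑ B : (∀ i, Finset (X i)), lam2 B * ∏ i, if ε i (B i) = true then (1:ℝ) else 0)
            - ∑ B : (∀ i, Finset (X i)), lam3 B * ∏ i, if ε i (B i) = true then (1:ℝ) else 0 := by
        rw [← Finset.sum_add_distrib, ← Finset.sum_sub_distrib]
        apply Finset.sum_congr rfl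
        intro B _
        ring
      rw [split, ← he1 ε hε, ← he2 ε hε, ← he3 ε hε, hprod, hprod, hprod,
        ← Finset.mul_prod_erase _ (fun i => if ε i (A i) = true then (1:ℝ) else 0)
          (Finset.mem_univ j)]
      have k1 := hε j (A j) (hA j).1 (hA j).2
      have k2 := hε j ({x0 j}) hu_prop.1 hu_prop.2
      rw [k1, k2]
      cases hb : ε j (A j) <;> cases hbu : ε j ({x0 j} : Finset (X j)) <;> simp <;> ring

def kp_e1 {α : Type*} [Fintype α] [DecidableEq α] (x0 : α) (W : Finset α) :
    Finset α → Bool := fun S =>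
  if x0 ∈ S then decide (x0 ∈ W ∧ (S = W ∨ S = {x0}))
  else decide (¬(x0 ∈ W ∧ (Sᶜ = W ∨ Sᶜ = {x0})))

def kp_e2 {α : Type*} [Fintype α] [DecidableEq α] (x0 : α) : Finset α → Bool := fun S =>
  if x0 ∈ S then decide (S = {x0}) else decide (¬(Sᶜ = {x0}))

lemma kp_choice_ok {α : Type*} [Fintype α] [DecidableEq α] (x0 : α) (P : Finset α → Prop)
    [DecidablePred P] (S : Finset α) :
    (if x0 ∈ Sᶜ then decide (P Sᶜ) else decide (¬ P Sᶜᶜ))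
      = !(if x0 ∈ S then decide (P S) else decide (¬ P Sᶜ)) := by
  by_cases hx : x0 ∈ S
  · have hx' : x0 ∉ Sᶜ := by simp [Finset.mem_compl, hx]
    simp [hx, hx', compl_compl, decide_not]
  · have hx' : x0 ∈ Sᶜ := Finset.mem_compl.2 hx
    simp [hx, hx', decide_not]

lemma kp_e1_ok {α : Type*} [Fintype α] [DecidableEq α] (x0 : α) (W : Finset α) (S : Finset α) :
    kp_e1 x0 W Sᶜ = !kp_e1 x0 W S := by
  unfold kp_e1
  exact kp_choice_ok x0 (fun S => x0 ∈ W ∧ (S = W ∨ S = {x0})) S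

lemma kp_e2_ok {α : Type*} [Fintype α] [DecidableEq α] (x0 : α) (S : Finset α) :
    kp_e2 x0 Sᶜ = !kp_e2 x0 S := by
  unfold kp_e2
  exact kp_choice_ok x0 (fun S => S = {x0}) S

lemma kp_delta {α : Type*} [Fintype α] [DecidableEq α] (x0 : α)
    (W : Finset α) (hW : x0 ∈ W ∨ W = {x0}ᶜ) (S : Finset α) (hS : x0 ∈ S ∨ S = {x0}ᶜ) :
    ((if kp_e1 x0 W S = true then (1:ℝ) else 0)
      - (if x0 ∈ W ∧ W ≠ {x0} then (1:ℝ) else 0) * (if kp_e2 x0 S = true then 1 else 0))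
      = if S = W then 1 else 0 := by
  have hxc : x0 ∉ ({x0}ᶜ : Finset α) := by simp [Finset.mem_compl]
  rcases hS with hS | hS
  · rcases hW with hW | hW
    · by_cases hWx : W = {x0}
      · simp only [kp_e1, kp_e2, if_pos hS, hW, hWx, true_and, ne_eq, not_true_eq_false,
          and_false, if_false]
        by_cases hSx : S = {x0} <;> simp [hSx]
      · simp only [kp_e1, kp_e2, if_pos hS, hW, hWx, true_and, ne_eq, not_false_eq_true,
          and_true, if_true]
        by_cases hSW : S = W
        · have hSx : S ≠ {x0} := by rw [hSW]; exact hWx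
          simp [hSW, hSx, hWx]
        · by_cases hSx : S = {x0}
          · subst hSx; simp [hSW]
          · simp [hSW, hSx, hWx]
    · have hWx : x0 ∉ W := by rw [hW]; exact hxc
      have hSW : S ≠ W := fun h => hWx (h ▸ hS)
      simp [kp_e1, if_pos hS, hWx, hSW]
  · have hSx : x0 ∉ S := by rw [hS]; exact hxc
    have hScc : Sᶜ = {x0} := by rw [hS, compl_compl]
    rcases hW with hW | hW
    · have hSW : S ≠ W := fun h => hSx (h ▸ hW)
      simp [kp_e1, kp_e2, if_neg hSx, hW, hScc, hSW]
    · have hSW : S = W := by rw [hS, hW]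
      have hWx : x0 ∉ W := by rw [hW]; exact hxc
      simp [kp_e1, kp_e2, if_neg hSx, hScc, hSW, hWx]

lemma kp_sep {d : ℕ} {X : Fin d → Type*} [∀ i, Fintype (X i)] [∀ i, DecidableEq (X i)]
    (x0 : ∀ i, X i)
    (μ ν : (∀ i, Finset (X i)) → ℝ)
    (hμ : ∀ B, μ B ≠ 0 → ∀ i, x0 i ∈ B i ∨ B i = ({x0 i}ᶜ : Finset (X i)))
    (hν : ∀ B, ν B ≠ 0 → ∀ i, x0 i ∈ B i ∨ B i = ({x0 i}ᶜ : Finset (X i)))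
    (h : ∀ ε : ∀ i, Finset (X i) → Bool,
      (∀ i, ∀ S : Finset (X i), S.Nonempty → S ≠ Finset.univ → ε i Sᶜ = !ε i S) →
      (∑ B : (∀ i, Finset (X i)), μ B * ∏ i, if ε i (B i) = true then (1:ℝ) else 0) =
        ∑ B : (∀ i, Finset (X i)), ν B * ∏ i, if ε i (B i) = true then (1:ℝ) else 0) :
    ∀ B, μ B = ν B := by
  classical
  intro B0
  by_cases hb0 : ∀ i, x0 i ∈ B0 i ∨ B0 i = ({x0 i}ᶜ : Finset (X i))
  · -- main case
    set cc : Fin d → ℝ := fun i => if x0 i ∈ B0 i ∧ B0 i ≠ {x0 i} then (1:ℝ) else 0 with hcc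
    have key : ∀ (μ : (∀ i, Finset (X i)) → ℝ),
        (∀ B, μ B ≠ 0 → ∀ i, x0 i ∈ B i ∨ B i = ({x0 i}ᶜ : Finset (X i))) →
        μ B0 = ∑ τ ∈ Fintype.piFinset (fun _ : Fin d => (Finset.univ : Finset Bool)),
          ((∏ i, (if τ i then (1:ℝ) else -(cc i))) *
            ∑ B : (∀ i, Finset (X i)), μ B *
              ∏ i, (if (if τ i then kp_e1 (x0 i) (B0 i) else kp_e2 (x0 i)) (B i) = true
                then (1:ℝ) else 0)) := by
      intro μ hμ
      have step1 : μ B0 = ∑ B : (∀ i, Finset (X i)), μ B *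
          ∏ i, ((if kp_e1 (x0 i) (B0 i) (B i) = true then (1:ℝ) else 0)
            - cc i * (if kp_e2 (x0 i) (B i) = true then 1 else 0)) := by
        rw [Finset.sum_eq_single B0]
        · have hone : ∀ i ∈ Finset.univ, ((if kp_e1 (x0 i) (B0 i) (B0 i) = true then (1:ℝ) else 0)
              - cc i * (if kp_e2 (x0 i) (B0 i) = true then 1 else 0)) = 1 := by
            intro i _
            rw [hcc]
            rw [kp_delta (x0 i) (B0 i) (hb0 i) (B0 i) (hb0 i)]
            simp
          rw [Finset.prod_congr rfl hone, Finset.prod_const_one, mul_one]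
        · intro B _ hBne
          by_cases hzB : μ B = 0
          · rw [hzB, zero_mul]
          · have : ¬∀ i, B i = B0 i := fun hh => hBne (funext hh)
            push_neg at this
            obtain ⟨i, hi⟩ := this
            have hzero : ((if kp_e1 (x0 i) (B0 i) (B i) = true then (1:ℝ) else 0)
                - cc i * (if kp_e2 (x0 i) (B i) = true then 1 else 0)) = 0 := by
              rw [hcc, kp_delta (x0 i) (B0 i) (hb0 i) (B i) (hμ B hzB i)]
              simp [hi]
            rw [Finset.prod_eq_zero (Finset.mem_univ i) hzero, mul_zero]
        · intro hB0; exact absurd (Finset.mem_univ B0) hB0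
      have step2 : ∀ B : (∀ i, Finset (X i)),
          (∏ i, ((if kp_e1 (x0 i) (B0 i) (B i) = true then (1:ℝ) else 0)
            - cc i * (if kp_e2 (x0 i) (B i) = true then 1 else 0)))
          = ∑ τ ∈ Fintype.piFinset (fun _ : Fin d => (Finset.univ : Finset Bool)),
              (∏ i, (if τ i then (1:ℝ) else -(cc i))) *
              ∏ i, (if (if τ i then kp_e1 (x0 i) (B0 i) else kp_e2 (x0 i)) (B i) = true
                then (1:ℝ) else 0) := by
        intro B
        have hfac : ∀ i, ((if kp_e1 (x0 i) (B0 i) (B i) = true then (1:ℝ) else 0)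
            - cc i * (if kp_e2 (x0 i) (B i) = true then 1 else 0))
            = ∑ b ∈ (Finset.univ : Finset Bool), (if b then (1:ℝ) else -(cc i)) *
              (if (if b then kp_e1 (x0 i) (B0 i) else kp_e2 (x0 i)) (B i) = true
                then (1:ℝ) else 0) := by
          intro i
          rw [Fintype.sum_bool]
          simp
          by_cases h2 : kp_e2 (x0 i) (B i) = true <;> simp [h2] <;> ring_nf
        rw [Finset.prod_congr rfl (fun i _ => hfac i), Finset.prod_univ_sum]
        apply Finset.sum_congr rfl
        intro τ _
        rw [Finset.prod_mul_distrib]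
      rw [step1, Finset.sum_congr rfl (fun B _ => by rw [step2 B])]
      simp_rw [Finset.mul_sum]
      rw [Finset.sum_comm]
      apply Finset.sum_congr rfl
      intro τ _
      apply Finset.sum_congr rfl
      intro B _
      ring
    have hvalid : ∀ τ : Fin d → Bool,
        ∀ i, ∀ S : Finset (X i), S.Nonempty → S ≠ Finset.univ →
          (if τ i then kp_e1 (x0 i) (B0 i) else kp_e2 (x0 i)) Sᶜ
            = !(if τ i then kp_e1 (x0 i) (B0 i) else kp_e2 (x0 i)) S := by
      intro τ i S _ _
      cases hτ : τ i <;> simp [hτ, kp_e1_ok, kp_e2_ok]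
    rw [key μ hμ, key ν hν]
    apply Finset.sum_congr rfl
    intro τ _
    congr 1
    exact h (fun i => if τ i then kp_e1 (x0 i) (B0 i) else kp_e2 (x0 i)) (hvalid τ)
  · have hμ0 : μ B0 = 0 := by by_contra h'; exact hb0 (hμ B0 h')
    have hν0 : ν B0 = 0 := by by_contra h'; exact hb0 (hν B0 h')
    rw [hμ0, hν0]


/-- for a polybox `F` with two proper suits `𝓕`, `𝓖` and any additive
function `f` on proper boxes, `∑_{A ∈ 𝓕} f A = ∑_{A ∈ 𝓖} f A`. -/
theorem stmt_13 {d : ℕ} (X : Fin d → Type*) [∀ i, Fintype (X i)] [∀ i, DecidableEq (X i)]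
    (hX : ∀ i, 2 ≤ Fintype.card (X i))
    (f : (∀ i, Finset (X i)) → ℝ)
    (hadd : ∀ (i : Fin d) (A C : ∀ i, Finset (X i)),
      (∀ j, (A j).Nonempty ∧ A j ≠ Finset.univ) →
      (∀ j, (C j).Nonempty ∧ C j ≠ Finset.univ) →
      (∀ j, j ≠ i → A j = C j) →
      f A + f (Function.update A i (A i)ᶜ) = f C + f (Function.update C i (C i)ᶜ))
    (F : Set (∀ i, X i))
    (𝓕 𝓖 : Finset (∀ i, Finset (X i)))
    (h𝓕p : ∀ A ∈ 𝓕, ∀ i, (A i).Nonempty ∧ A i ≠ Finset.univ)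
    (h𝓖p : ∀ A ∈ 𝓖, ∀ i, (A i).Nonempty ∧ A i ≠ Finset.univ)
    (h𝓕d : ∀ A ∈ 𝓕, ∀ B ∈ 𝓕, A ≠ B → ∃ i, A i = (B i)ᶜ)
    (h𝓖d : ∀ A ∈ 𝓖, ∀ B ∈ 𝓖, A ≠ B → ∃ i, A i = (B i)ᶜ)
    (h𝓕u : F = {x | ∃ A ∈ 𝓕, ∀ i, x i ∈ A i})
    (h𝓖u : F = {x | ∃ A ∈ 𝓖, ∀ i, x i ∈ A i}) :
    ∑ A ∈ 𝓕, f A = ∑ A ∈ 𝓖, f A := by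
  classical
  have hnonempty : ∀ i, Nonempty (X i) := fun i =>
    Fintype.card_pos_iff.1 (by have := hX i; omega)
  have x0 : ∀ i, X i := fun i => (hnonempty i).some
  have hu : {x : ∀ i, X i | ∃ A ∈ 𝓕, ∀ i, x i ∈ A i} = {x | ∃ A ∈ 𝓖, ∀ i, x i ∈ A i} := by
    rw [← h𝓕u, h𝓖u]
  have hex := kp_expand x0 hX f hadd
  have key : ∀ (𝓗 : Finset (∀ i, Finset (X i))),
      (∀ A ∈ 𝓗, ∀ i, (A i).Nonempty ∧ A i ≠ Finset.univ) →
      ∃ Λ : (∀ i, Finset (X i)) → ℝ,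
        (∀ B, Λ B ≠ 0 → ∀ i, x0 i ∈ B i ∨ B i = ({x0 i}ᶜ : Finset (X i))) ∧
        ((∑ A ∈ 𝓗, f A) = ∑ B : (∀ i, Finset (X i)), Λ B * f B) ∧
        (∀ ε : ∀ i, Finset (X i) → Bool,
          (∀ i, ∀ S : Finset (X i), S.Nonempty → S ≠ Finset.univ → ε i Sᶜ = !ε i S) →
          (∑ A ∈ 𝓗, ∏ i, if ε i (A i) = true then (1:ℝ) else 0)
            = ∑ B : (∀ i, Finset (X i)), Λ B *
                ∏ i, if ε i (B i) = true then (1:ℝ) else 0) := by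
    intro 𝓗 hp
    refine ⟨fun B => ∑ A ∈ 𝓗, (if hA : (∀ j, (A j).Nonempty ∧ A j ≠ Finset.univ)
      then Classical.choose (hex A hA) B else 0), ?_, ?_, ?_⟩
    · intro B hB
      obtain ⟨A, hA, hne⟩ : ∃ A ∈ 𝓗, (if hA : (∀ j, (A j).Nonempty ∧ A j ≠ Finset.univ)
          then Classical.choose (hex A hA) B else 0) ≠ 0 := by
        by_contra hc
        push_neg at hc
        exact hB (Finset.sum_eq_zero hc)
      rw [dif_pos (hp A hA)] at hne
      exact ((Classical.choose_spec (hex A (hp A hA))).1 B hne).2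
    · have hstep : ∀ A ∈ 𝓗, f A = ∑ B : (∀ i, Finset (X i)),
          (if hA : (∀ j, (A j).Nonempty ∧ A j ≠ Finset.univ)
            then Classical.choose (hex A hA) B else 0) * f B := by
        intro A hA
        exact ((Classical.choose_spec (hex A (hp A hA))).2.1).trans
          (Finset.sum_congr rfl (fun B _ => by rw [dif_pos (hp A hA)]))
      rw [Finset.sum_congr rfl hstep, Finset.sum_comm]
      apply Finset.sum_congr rfl
      intro B _
      rw [Finset.sum_mul]
    · intro ε hε
      have hstep : ∀ A ∈ 𝓗, (∏ i, if ε i (A i) = true then (1:ℝ) else 0)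
          = ∑ B : (∀ i, Finset (X i)),
          (if hA : (∀ j, (A j).Nonempty ∧ A j ≠ Finset.univ)
            then Classical.choose (hex A hA) B else 0) *
            ∏ i, if ε i (B i) = true then (1:ℝ) else 0 := by
        intro A hA
        exact ((Classical.choose_spec (hex A (hp A hA))).2.2 ε hε).trans
          (Finset.sum_congr rfl (fun B _ => by rw [dif_pos (hp A hA)]))
      rw [Finset.sum_congr rfl hstep, Finset.sum_comm]
      apply Finset.sum_congr rfl
      intro B _
      rw [Finset.sum_mul]
  obtain ⟨Λ𝓕, hs𝓕, hf𝓕, he𝓕⟩ := key 𝓕 h𝓕p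
  obtain ⟨Λ𝓖, hs𝓖, hf𝓖, he𝓖⟩ := key 𝓖 h𝓖p
  have hεsums : ∀ ε : ∀ i, Finset (X i) → Bool,
      (∀ i, ∀ S : Finset (X i), S.Nonempty → S ≠ Finset.univ → ε i Sᶜ = !ε i S) →
      (∑ B : (∀ i, Finset (X i)), Λ𝓕 B * ∏ i, if ε i (B i) = true then (1:ℝ) else 0) =
        ∑ B : (∀ i, Finset (X i)), Λ𝓖 B * ∏ i, if ε i (B i) = true then (1:ℝ) else 0 := by
    intro ε hε
    rw [← he𝓕 ε hε, ← he𝓖 ε hε]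
    exact kp_count 𝓕 𝓖 h𝓕p h𝓖p h𝓕d h𝓖d ε hε
      (kp_seliff x0 𝓕 𝓖 h𝓕p h𝓖p h𝓕d h𝓖d hu ε hε)
  have hΛ := kp_sep x0 Λ𝓕 Λ𝓖 hs𝓕 hs𝓖 hεsums
  rw [hf𝓕, hf𝓖]
  exact Finset.sum_congr rfl (fun B _ => by rw [hΛ B])
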